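/- Inside the degree-2 homogeneous part of the polynomial ring ℂ[X_{ijk} : i,j,k ∈ {1,2}], the ℂ-linear span of all the 2×2 minors of the three flattenings of the 2×2×2 cube of variables (i.e., of all binomials X_{ijk}X_{i'j'k'} − X_{i'jk}X_{ij'k'}, X_{ijk}X_{i'j'k'} − X_{ij'k}X_{i'jk'}, X_{ijk}X_{i'j'k'} − X_{ijk'}X_{i'j'k} for i,i',j,j',k,k' ∈ {1,2}) has dimension exactly 9. -/
import Mathlib


open MvPolynomial

/-- The nine chosen quadratic generators. -/
noncomputable def segreT : Fin 9 → MvPolynomial (Fin 2 × Fin 2 × Fin 2) ℂ :=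
  ![X (0,0,0) * X (1,1,1) - X (0,0,1) * X (1,1,0),
    X (0,0,0) * X (1,1,1) - X (0,1,0) * X (1,0,1),
    X (0,0,0) * X (1,1,1) - X (1,0,0) * X (0,1,1),
    X (0,0,0) * X (0,1,1) - X (0,0,1) * X (0,1,0),
    X (1,0,0) * X (1,1,1) - X (1,0,1) * X (1,1,0),
    X (0,0,0) * X (1,0,1) - X (0,0,1) * X (1,0,0),
    X (0,1,0) * X (1,1,1) - X (0,1,1) * X (1,1,0),
    X (0,0,0) * X (1,1,0) - X (0,1,0) * X (1,0,0),
    X (0,0,1) * X (1,1,1) - X (0,1,1) * X (1,0,1)]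

/-- Evaluation point: the indicator function of the pair `{a, b}` of variables. -/
def segrePick (a b : Fin 2 × Fin 2 × Fin 2) : Fin 2 × Fin 2 × Fin 2 → ℂ :=
  fun w => if w = a then 1 else if w = b then 1 else 0

lemma segre_mem_of_eq {P : Type*} [AddCommMonoid P] [Module ℂ P] {M : Submodule ℂ P} {f g : P}
    (h : g ∈ M) (e : f = g) : f ∈ M := e ▸ h

lemma segre_li : LinearIndependent ℂ segreT := by
  rw [Fintype.linearIndependent_iff]
  intro g hg
  have hv : ∀ a b : Fin 2 × Fin 2 × Fin 2,
      (aeval (segrePick a b)) (∑ i, g i • segreT i) = 0 := fun a b => by rw [hg, map_zero]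
  have h0 := hv (0,0,1) (1,1,0)
  have h1 := hv (0,1,0) (1,0,1)
  have h2 := hv (1,0,0) (0,1,1)
  have h3 := hv (0,0,1) (0,1,0)
  have h4 := hv (1,0,1) (1,1,0)
  have h5 := hv (0,0,1) (1,0,0)
  have h6 := hv (0,1,1) (1,1,0)
  have h7 := hv (0,1,0) (1,0,0)
  have h8 := hv (0,1,1) (1,0,1)
  simp (config := { decide := true }) [segreT, segrePick, Fin.sum_univ_succ]
    at h0 h1 h2 h3 h4 h5 h6 h7 h8
  intro i
  fin_cases i <;>
    first
    | exact h0 | exact h1 | exact h2 | exact h3 | exact h4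
    | exact h5 | exact h6 | exact h7 | exact h8

set_option maxHeartbeats 4000000 in
lemma segre_span_le : Submodule.span ℂ
        {f : MvPolynomial (Fin 2 × Fin 2 × Fin 2) ℂ | ∃ i i' j j' k k' : Fin 2,
          f = X (i, j, k) * X (i', j', k') - X (i', j, k) * X (i, j', k') ∨
          f = X (i, j, k) * X (i', j', k') - X (i, j', k) * X (i', j, k') ∨
          f = X (i, j, k) * X (i', j', k') - X (i, j, k') * X (i', j', k)}
      ≤ Submodule.span ℂ (Set.range segreT) := by
  rw [Submodule.span_le]
  have h0 : (X (0,0,0) * X (1,1,1) - X (0,0,1) * X (1,1,0) : MvPolynomial (Fin 2 × Fin 2 × Fin 2) ℂ) ∈ Submodule.span ℂ (Set.range segreT) := Submodule.subset_span ⟨0, rfl⟩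
  have h1 : (X (0,0,0) * X (1,1,1) - X (0,1,0) * X (1,0,1) : MvPolynomial (Fin 2 × Fin 2 × Fin 2) ℂ) ∈ Submodule.span ℂ (Set.range segreT) := Submodule.subset_span ⟨1, rfl⟩
  have h2 : (X (0,0,0) * X (1,1,1) - X (1,0,0) * X (0,1,1) : MvPolynomial (Fin 2 × Fin 2 × Fin 2) ℂ) ∈ Submodule.span ℂ (Set.range segreT) := Submodule.subset_span ⟨2, rfl⟩
  have h3 : (X (0,0,0) * X (0,1,1) - X (0,0,1) * X (0,1,0) : MvPolynomial (Fin 2 × Fin 2 × Fin 2) ℂ) ∈ Submodule.span ℂ (Set.range segreT) := Submodule.subset_span ⟨3, rfl⟩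
  have h4 : (X (1,0,0) * X (1,1,1) - X (1,0,1) * X (1,1,0) : MvPolynomial (Fin 2 × Fin 2 × Fin 2) ℂ) ∈ Submodule.span ℂ (Set.range segreT) := Submodule.subset_span ⟨4, rfl⟩
  have h5 : (X (0,0,0) * X (1,0,1) - X (0,0,1) * X (1,0,0) : MvPolynomial (Fin 2 × Fin 2 × Fin 2) ℂ) ∈ Submodule.span ℂ (Set.range segreT) := Submodule.subset_span ⟨5, rfl⟩
  have h6 : (X (0,1,0) * X (1,1,1) - X (0,1,1) * X (1,1,0) : MvPolynomial (Fin 2 × Fin 2 × Fin 2) ℂ) ∈ Submodule.span ℂ (Set.range segreT) := Submodule.subset_span ⟨6, rfl⟩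
  have h7 : (X (0,0,0) * X (1,1,0) - X (0,1,0) * X (1,0,0) : MvPolynomial (Fin 2 × Fin 2 × Fin 2) ℂ) ∈ Submodule.span ℂ (Set.range segreT) := Submodule.subset_span ⟨7, rfl⟩
  have h8 : (X (0,0,1) * X (1,1,1) - X (0,1,1) * X (1,0,1) : MvPolynomial (Fin 2 × Fin 2 × Fin 2) ℂ) ∈ Submodule.span ℂ (Set.range segreT) := Submodule.subset_span ⟨8, rfl⟩
  rintro f ⟨i, i', j, j', k, k', h | h | h⟩ <;> subst h <;>
    fin_cases i <;> fin_cases i' <;> fin_cases j <;> fin_cases j' <;>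
    fin_cases k <;> fin_cases k' <;>
    simp only [Fin.zero_eta, Fin.mk_one] <;>
    first
    | (refine segre_mem_of_eq (Submodule.zero_mem _) ?_; ring1)
    | (refine segre_mem_of_eq h0 ?_; ring1)
    | (refine segre_mem_of_eq h1 ?_; ring1)
    | (refine segre_mem_of_eq h2 ?_; ring1)
    | (refine segre_mem_of_eq h3 ?_; ring1)
    | (refine segre_mem_of_eq h4 ?_; ring1)
    | (refine segre_mem_of_eq h5 ?_; ring1)
    | (refine segre_mem_of_eq h6 ?_; ring1)
    | (refine segre_mem_of_eq h7 ?_; ring1)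
    | (refine segre_mem_of_eq h8 ?_; ring1)
    | (refine segre_mem_of_eq (Submodule.neg_mem _ h0) ?_; ring1)
    | (refine segre_mem_of_eq (Submodule.neg_mem _ h1) ?_; ring1)
    | (refine segre_mem_of_eq (Submodule.neg_mem _ h2) ?_; ring1)
    | (refine segre_mem_of_eq (Submodule.neg_mem _ h3) ?_; ring1)
    | (refine segre_mem_of_eq (Submodule.neg_mem _ h4) ?_; ring1)
    | (refine segre_mem_of_eq (Submodule.neg_mem _ h5) ?_; ring1)
    | (refine segre_mem_of_eq (Submodule.neg_mem _ h6) ?_; ring1)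
    | (refine segre_mem_of_eq (Submodule.neg_mem _ h7) ?_; ring1)
    | (refine segre_mem_of_eq (Submodule.neg_mem _ h8) ?_; ring1)
    | (refine segre_mem_of_eq (Submodule.sub_mem _ h0 h1) ?_; ring1)
    | (refine segre_mem_of_eq (Submodule.sub_mem _ h1 h0) ?_; ring1)
    | (refine segre_mem_of_eq (Submodule.sub_mem _ h0 h2) ?_; ring1)
    | (refine segre_mem_of_eq (Submodule.sub_mem _ h2 h0) ?_; ring1)
    | (refine segre_mem_of_eq (Submodule.sub_mem _ h1 h2) ?_; ring1)
    | (refine segre_mem_of_eq (Submodule.sub_mem _ h2 h1) ?_; ring1)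

lemma segre_span_ge : Submodule.span ℂ (Set.range segreT) ≤ Submodule.span ℂ
        {f : MvPolynomial (Fin 2 × Fin 2 × Fin 2) ℂ | ∃ i i' j j' k k' : Fin 2,
          f = X (i, j, k) * X (i', j', k') - X (i', j, k) * X (i, j', k') ∨
          f = X (i, j, k) * X (i', j', k') - X (i, j', k) * X (i', j, k') ∨
          f = X (i, j, k) * X (i', j', k') - X (i, j, k') * X (i', j', k)} := by
  rw [Submodule.span_le]
  rintro f ⟨m, rfl⟩
  apply Submodule.subset_span
  fin_cases m
  · exact ⟨0, 1, 0, 1, 0, 1, Or.inr (Or.inr rfl)⟩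
  · exact ⟨0, 1, 0, 1, 0, 1, Or.inr (Or.inl rfl)⟩
  · exact ⟨0, 1, 0, 1, 0, 1, Or.inl rfl⟩
  · exact ⟨0, 0, 0, 1, 0, 1, Or.inr (Or.inr rfl)⟩
  · exact ⟨1, 1, 0, 1, 0, 1, Or.inr (Or.inr rfl)⟩
  · exact ⟨0, 1, 0, 0, 0, 1, Or.inr (Or.inr rfl)⟩
  · exact ⟨0, 1, 1, 1, 0, 1, Or.inr (Or.inr rfl)⟩
  · exact ⟨0, 1, 0, 1, 0, 0, Or.inr (Or.inl rfl)⟩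
  · exact ⟨0, 1, 0, 1, 1, 1, Or.inr (Or.inl rfl)⟩

/-- The ℂ-linear span of the 2×2 minors of the three flattenings of the 2×2×2 cube of
variables `X (i, j, k)` (all of which are homogeneous of degree 2) has dimension
exactly 9: the nine linearly independent quadratic equations of the Segre embedding
`ℙ¹×ℙ¹×ℙ¹ ↪ ℙ⁷`. -/
theorem segre_P1P1P1_nine_equations :
    Module.finrank ℂ
      (Submodule.span ℂ
        {f : MvPolynomial (Fin 2 × Fin 2 × Fin 2) ℂ | ∃ i i' j j' k k' : Fin 2,
          f = X (i, j, k) * X (i', j', k') - X (i', j, k) * X (i, j', k') ∨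
          f = X (i, j, k) * X (i', j', k') - X (i, j', k) * X (i', j, k') ∨
          f = X (i, j, k) * X (i', j', k') - X (i, j, k') * X (i', j', k)}) = 9 := by
  rw [le_antisymm segre_span_le segre_span_ge]
  simpa using finrank_span_eq_card segre_li
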